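/- Let B₀ ∈ (0, π/4) and suppose (A, B) is a C² solution on [0, τ*) of the system B'' = -B'/τ + 2cot(2B)(B')² - 2tan(2B)(A')², A'' = -A'/τ - sin(4B)/(πτ) + 2cot(2B)A'B' - 2tan(2B)A'B', with B(0) = B₀, B'(0) = 0, A(0) = 0, A'(0) = -sin(4B₀)/π, and B(τ) > 0 on [0, τ*). Then B'(τ) ≤ 0 and B(τ) ≤ B₀ for all τ ∈ [0, τ*). -/

import Mathlib

open Real Topology Filter

theorem B_monotone_effective (B₀ τstar : ℝ) (hB₀ : B₀ ∈ Set.Ioo 0 (π / 4))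
    (hτ : 0 < τstar) (A B : ℝ → ℝ)
    (hreg : ContDiffOn ℝ 2 A (Set.Ico 0 τstar) ∧ ContDiffOn ℝ 2 B (Set.Ico 0 τstar))
    (hBeq : ∀ τ ∈ Set.Ioo (0:ℝ) τstar,
      deriv (deriv B) τ = -deriv B τ / τ
        + 2 * (Real.cos (2 * B τ) / Real.sin (2 * B τ)) * (deriv B τ) ^ 2
        - 2 * Real.tan (2 * B τ) * (deriv A τ) ^ 2)
    (hAeq : ∀ τ ∈ Set.Ioo (0:ℝ) τstar,
      deriv (deriv A) τ = -deriv A τ / τ - Real.sin (4 * B τ) / (π * τ)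
        + 2 * (Real.cos (2 * B τ) / Real.sin (2 * B τ)) * deriv A τ * deriv B τ
        - 2 * Real.tan (2 * B τ) * deriv A τ * deriv B τ)
    (hB0 : B 0 = B₀) (hB'0 : deriv B 0 = 0)
    (hA0 : A 0 = 0) (hA'0 : deriv A 0 = -Real.sin (4 * B₀) / π)
    (hBpos : ∀ τ ∈ Set.Ico (0:ℝ) τstar, 0 < B τ) :
    ∀ τ ∈ Set.Ico (0:ℝ) τstar, deriv B τ ≤ 0 ∧ B τ ≤ B₀ := by
  classical
  obtain ⟨hA2, hB2⟩ := hreg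
  obtain ⟨hB₀pos, hB₀lt⟩ := hB₀
  have hπ : (0:ℝ) < π := Real.pi_pos
  set cval : ℝ := (B₀ + π/4)/2 with hcval
  have hc1 : B₀ < cval := by rw [hcval]; linarith
  have hc2 : cval < π/4 := by rw [hcval]; linarith
  have hu : UniqueDiffOn ℝ (Set.Ico (0:ℝ) τstar) := uniqueDiffOn_Ico 0 τstar
  set g : ℝ → ℝ := derivWithin B (Set.Ico 0 τstar) with hgdef
  set f : ℝ → ℝ := derivWithin A (Set.Ico 0 τstar) with hfdef
  have hgc : ContinuousOn g (Set.Ico 0 τstar) := hB2.continuousOn_derivWithin hu one_le_two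
  have hfc : ContinuousOn f (Set.Ico 0 τstar) := hA2.continuousOn_derivWithin hu one_le_two
  have hBc : ContinuousOn B (Set.Ico 0 τstar) := hB2.continuousOn
  have hmem : ∀ τ ∈ Set.Ioo (0:ℝ) τstar, Set.Ico (0:ℝ) τstar ∈ 𝓝 τ := fun τ hτ' =>
    mem_nhds_iff.2 ⟨Set.Ioo 0 τstar, Set.Ioo_subset_Ico_self, isOpen_Ioo, hτ'⟩
  have hg_eq : ∀ τ ∈ Set.Ioo (0:ℝ) τstar, g τ = deriv B τ := fun τ hτ' =>
    derivWithin_of_mem_nhds (hmem τ hτ')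
  have hf_eq : ∀ τ ∈ Set.Ioo (0:ℝ) τstar, f τ = deriv A τ := fun τ hτ' =>
    derivWithin_of_mem_nhds (hmem τ hτ')
  set cc : ℝ → ℝ := fun s => 2 * (Real.cos (2 * B s) / Real.sin (2 * B s)) * g s with hccdef
  set dd : ℝ → ℝ := fun s => 2 * s * Real.tan (2 * B s) * (f s) ^ 2 with hdddef
  set w : ℝ → ℝ := fun s => s * g s with hwdef
  -- derivative of w on Ioo
  have hwd : ∀ τ ∈ Set.Ioo (0:ℝ) τstar, HasDerivAt w (cc τ * w τ - dd τ) τ := by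
    intro τ hτ'
    have hτpos : 0 < τ := hτ'.1
    have hBd : HasDerivAt B (g τ) τ := by
      have := ((hB2.differentiableOn two_ne_zero).differentiableAt (hmem τ hτ')).hasDerivAt
      rwa [← hg_eq τ hτ'] at this
    have hgdiff : DifferentiableAt ℝ g τ := by
      have h1 : ContDiffOn ℝ 1 g (Set.Ico 0 τstar) := hB2.derivWithin hu (by norm_num)
      exact (h1.differentiableOn one_ne_zero).differentiableAt (hmem τ hτ')
    have hgg : deriv g τ = deriv (deriv B) τ := by
      apply Filter.EventuallyEq.deriv_eq
      filter_upwards [isOpen_Ioo.mem_nhds hτ'] with x hx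
      exact hg_eq x hx
    have hderivg : deriv g τ = -(g τ) / τ
        + 2 * (Real.cos (2 * B τ) / Real.sin (2 * B τ)) * (g τ) ^ 2
        - 2 * Real.tan (2 * B τ) * (f τ) ^ 2 := by
      rw [hgg, hBeq τ hτ', hg_eq τ hτ', hf_eq τ hτ']
    have hgd : HasDerivAt g (deriv g τ) τ := hgdiff.hasDerivAt
    have hwd' : HasDerivAt w (1 * g τ + τ * deriv g τ) τ := (hasDerivAt_id τ).mul hgd
    have : 1 * g τ + τ * deriv g τ = cc τ * w τ - dd τ := by
      rw [hderivg, hccdef, hdddef, hwdef]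
      field_simp
      ring
    rwa [this] at hwd'
  -- key lemma
  have key : ∀ T ∈ Set.Ioo (0:ℝ) τstar, (∀ s ∈ Set.Icc (0:ℝ) T, B s ≤ cval) →
      (∀ s ∈ Set.Ioc (0:ℝ) T, g s ≤ 0) ∧ (∀ s ∈ Set.Icc (0:ℝ) T, B s ≤ B₀) := by
    intro T hT hBle
    have hsub : Set.Icc (0:ℝ) T ⊆ Set.Ico 0 τstar := fun x hx =>
      ⟨hx.1, lt_of_le_of_lt hx.2 hT.2⟩
    have hsubo : Set.Ioo (0:ℝ) T ⊆ Set.Ioo 0 τstar := fun x hx => ⟨hx.1, hx.2.trans hT.2⟩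
    have hsin : ∀ s ∈ Set.Icc (0:ℝ) T, 0 < Real.sin (2 * B s) := by
      intro s hs
      apply Real.sin_pos_of_pos_of_lt_pi
      · have := hBpos s (hsub hs); linarith
      · have := hBle s hs; nlinarith
    have hcos : ∀ s ∈ Set.Icc (0:ℝ) T, 0 < Real.cos (2 * B s) := by
      intro s hs
      apply Real.cos_pos_of_mem_Ioo
      constructor
      · have := hBpos s (hsub hs); linarith
      · have := hBle s hs; linarith
    have htan : ∀ s ∈ Set.Icc (0:ℝ) T, 0 ≤ Real.tan (2 * B s) := by
      intro s hs
      rw [Real.tan_eq_sin_div_cos]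
      exact div_nonneg (le_of_lt (hsin s hs)) (le_of_lt (hcos s hs))
    have hccT : ContinuousOn cc (Set.Icc 0 T) := by
      apply ContinuousOn.mul
      apply ContinuousOn.mul continuousOn_const
      apply ContinuousOn.div
      · exact Real.continuous_cos.comp_continuousOn
          ((continuousOn_const.mul (hBc.mono hsub)))
      · exact Real.continuous_sin.comp_continuousOn
          ((continuousOn_const.mul (hBc.mono hsub)))
      · intro s hs; exact ne_of_gt (hsin s hs)
      · exact hgc.mono hsub
    set C : ℝ → ℝ := fun x => ∫ s in (0:ℝ)..x, cc s with hCdef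
    have hCc : ContinuousOn C (Set.Icc 0 T) := by
      have hInt : MeasureTheory.IntegrableOn cc (Set.Icc 0 T) := hccT.integrableOn_Icc
      have := intervalIntegral.continuousOn_primitive_interval
        (a := 0) (b := T) (μ := MeasureTheory.volume) (f := cc)
        (by rwa [Set.uIcc_of_le (le_of_lt hT.1)])
      rwa [Set.uIcc_of_le (le_of_lt hT.1)] at this
    have hCd : ∀ τ ∈ Set.Ioo (0:ℝ) T, HasDerivAt C (cc τ) τ := by
      intro τ hτ'
      apply intervalIntegral.integral_hasDerivAt_right
      · apply ContinuousOn.intervalIntegrable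
        apply hccT.mono
        rw [Set.uIcc_of_le (le_of_lt hτ'.1)]
        exact Set.Icc_subset_Icc le_rfl (le_of_lt hτ'.2)
      · exact (hccT.mono Set.Ioo_subset_Icc_self).stronglyMeasurableAtFilter isOpen_Ioo τ hτ'
      · exact (hccT.mono Set.Ioo_subset_Icc_self).continuousAt (isOpen_Ioo.mem_nhds hτ')
    set v : ℝ → ℝ := fun x => w x * Real.exp (-(C x)) with hvdef
    have hvc : ContinuousOn v (Set.Icc 0 T) := by
      apply ContinuousOn.mul
      · exact continuousOn_id.mul (hgc.mono hsub)
      · exact Real.continuous_exp.comp_continuousOn hCc.neg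
    have hvd : ∀ τ ∈ Set.Ioo (0:ℝ) T,
        HasDerivAt v (-(dd τ) * Real.exp (-(C τ))) τ := by
      intro τ hτ'
      have hw' := hwd τ (hsubo hτ')
      have hE : HasDerivAt (fun x => Real.exp (-(C x)))
          (Real.exp (-(C τ)) * (-(cc τ))) τ := ((hCd τ hτ').neg).exp
      have := hw'.mul hE
      exact this.congr_deriv (by ring)
    have hanti : AntitoneOn v (Set.Icc 0 T) := by
      apply antitoneOn_of_deriv_nonpos (convex_Icc 0 T) hvc
      · intro x hx
        rw [interior_Icc] at hx
        exact (hvd x hx).differentiableAt.differentiableWithinAt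
      · intro x hx
        rw [interior_Icc] at hx
        rw [(hvd x hx).deriv]
        have hdd : 0 ≤ dd x := by
          rw [hdddef]
          have h1 := htan x (Set.Ioo_subset_Icc_self hx)
          have h2 : (0:ℝ) ≤ x := le_of_lt hx.1
          positivity
        have := Real.exp_pos (-(C x))
        nlinarith
    have hw0 : w 0 = 0 := by rw [hwdef]; simp
    have hgle : ∀ s ∈ Set.Ioc (0:ℝ) T, g s ≤ 0 := by
      intro s hs
      have h0m : (0:ℝ) ∈ Set.Icc (0:ℝ) T := ⟨le_rfl, le_of_lt hT.1⟩
      have hsm : s ∈ Set.Icc (0:ℝ) T := ⟨le_of_lt hs.1, hs.2⟩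
      have := hanti h0m hsm (le_of_lt hs.1)
      have hv0 : v 0 = 0 := by rw [hvdef]; simp [hw0]
      rw [hv0] at this
      have hexp := Real.exp_pos (-(C s))
      have hvs : v s = w s * Real.exp (-(C s)) := rfl
      rw [hvs] at this
      have hwle : w s ≤ 0 := by
        by_contra hcon
        push_neg at hcon
        nlinarith [mul_pos hcon hexp]
      rw [hwdef] at hwle
      simp only at hwle
      nlinarith [hs.1]
    refine ⟨hgle, ?_⟩
    have hBanti : AntitoneOn B (Set.Icc 0 T) := by
      apply antitoneOn_of_deriv_nonpos (convex_Icc 0 T) (hBc.mono hsub)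
      · intro x hx
        rw [interior_Icc] at hx
        exact ((hB2.differentiableOn two_ne_zero).differentiableAt
          (hmem x (hsubo hx))).differentiableWithinAt
      · intro x hx
        rw [interior_Icc] at hx
        rw [← hg_eq x (hsubo hx)]
        exact hgle x ⟨hx.1, le_of_lt hx.2⟩
    intro s hs
    have := hBanti ⟨le_rfl, le_of_lt hT.1⟩ hs hs.1
    rwa [hB0] at this
  -- B ≤ cval on Icc 0 τ for every τ < τstar
  have hBcval : ∀ τ ∈ Set.Ioo (0:ℝ) τstar, ∀ s ∈ Set.Icc (0:ℝ) τ, B s ≤ cval := by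
    intro τ hτ'
    by_contra hcon
    push_neg at hcon
    obtain ⟨s₀, hs₀, hs₀'⟩ := hcon
    set E : Set ℝ := {t ∈ Set.Icc (0:ℝ) τ | cval ≤ B t} with hEdef
    have hsub : Set.Icc (0:ℝ) τ ⊆ Set.Ico 0 τstar := fun x hx =>
      ⟨hx.1, lt_of_le_of_lt hx.2 hτ'.2⟩
    have hEclosed : IsClosed E := by
      have : E = Set.Icc (0:ℝ) τ ∩ B ⁻¹' Set.Ici cval := by
        ext x; simp [hEdef, Set.mem_sep_iff, and_comm]
      rw [this]
      exact (hBc.mono hsub).preimage_isClosed_of_isClosed isClosed_Icc isClosed_Ici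
    have hEne : E.Nonempty := ⟨s₀, hs₀, le_of_lt hs₀'⟩
    have hEbdd : BddBelow E := ⟨0, fun x hx => hx.1.1⟩
    set T := sInf E with hTdef
    have hTE : T ∈ E := hEclosed.csInf_mem hEne hEbdd
    have hT0 : 0 < T := by
      rcases lt_or_eq_of_le hTE.1.1 with h | h
      · exact h
      · exfalso
        have := hTE.2
        rw [← h, hB0] at this
        linarith
    have hTlt : T < τstar := lt_of_le_of_lt hTE.1.2 hτ'.2
    have hlt : ∀ t ∈ Set.Ico (0:ℝ) T, B t < cval := by
      intro t ht
      by_contra hcon'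
      push_neg at hcon'
      have : t ∈ E := ⟨⟨ht.1, le_trans (le_of_lt ht.2) hTE.1.2⟩, hcon'⟩
      have := csInf_le hEbdd this
      rw [← hTdef] at this
      linarith [ht.2]
    -- for t ∈ (0, T), apply key on [0, t] to get B t ≤ B₀
    have hBt : ∀ t ∈ Set.Ioo (0:ℝ) T, B t ≤ B₀ := by
      intro t ht
      have htτ : t ∈ Set.Ioo (0:ℝ) τstar := ⟨ht.1, lt_trans ht.2 hTlt⟩
      have hle : ∀ s ∈ Set.Icc (0:ℝ) t, B s ≤ cval := by
        intro s hs
        exact le_of_lt (hlt s ⟨hs.1, lt_of_le_of_lt hs.2 ht.2⟩)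
      exact (key t htτ hle).2 t ⟨le_of_lt ht.1, le_rfl⟩
    -- continuity: B T ≤ B₀ < cval, contradiction
    have hBT : B T ≤ B₀ := by
      have hcw : ContinuousWithinAt B (Set.Icc 0 T) T :=
        (hBc.mono (fun x hx => ⟨hx.1, lt_of_le_of_lt hx.2 hTlt⟩)).continuousWithinAt
          ⟨le_of_lt hT0, le_rfl⟩
      have ht : Filter.Tendsto B (𝓝[Set.Ioo 0 T] T) (𝓝 (B T)) :=
        hcw.tendsto.mono_left (nhdsWithin_mono _
          (fun x hx => ⟨le_of_lt hx.1, le_of_lt hx.2⟩))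
      haveI : (𝓝[Set.Ioo (0:ℝ) T] T).NeBot := right_nhdsWithin_Ioo_neBot hT0
      exact le_of_tendsto ht (eventually_mem_nhdsWithin.mono hBt)
    linarith [hTE.2]
  -- conclusion
  intro τ hτmem
  rcases eq_or_lt_of_le hτmem.1 with h0 | h0
  · constructor
    · rw [← h0, hB'0]
    · rw [← h0, hB0]
  · have hτoo : τ ∈ Set.Ioo (0:ℝ) τstar := ⟨h0, hτmem.2⟩
    have hkey := key τ hτoo (hBcval τ hτoo)
    constructor
    · rw [← hg_eq τ hτoo]
      exact hkey.1 τ ⟨h0, le_rfl⟩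
    · exact hkey.2 τ ⟨le_of_lt h0, le_rfl⟩
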